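/- arXiv:2309.16914 — 6 statements merged into one kernel-verified Lean document; each statement's English description precedes it below -/
import Mathlib

section
/- Let y = (y_j^S)_{j∈U, S⊆F} be a KC-dual feasible solution and let ξ_j = Σ_{S⊆F} r_j^S · y_j^S be the cost shares induced by y. Then ξ satisfies the core property: for every group J ⊆ U and every set X ⊆ F that is feasible for J (i.e., Σ_{i∈X} a_{ij} ≥ r_j for all j ∈ J), it holds that Σ_{j∈J} ξ_j ≤ Σ_{i∈X} c_i. In particular, Σ_{j∈J} ξ_j is at most the minimum cost of any integer solution serving J. (Theorem 1 of the paper.) -/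
open Finset

/-- Residual requirement of user `j` given the set `S` of built facilities. -/
noncomputable def resReq {F U : Type*} [DecidableEq F]
    (a : F → U → ℝ) (r : U → ℝ) (S : Finset F) (j : U) : ℝ :=
  max (r j - ∑ i ∈ S, a i j) 0

/-- Residual contribution of facility `i` to user `j` given built facilities `S`. -/
noncomputable def resCon {F U : Type*} [DecidableEq F]
    (a : F → U → ℝ) (r : U → ℝ) (S : Finset F) (i : F) (j : U) : ℝ :=
  if i ∈ S then 0 else min (a i j) (resReq a r S j)

/-- KC-dual feasibility of a family `y = (y_j^S)`. -/
noncomputable def KCDualFeasible {F U : Type*} [Fintype F] [DecidableEq F] [Fintype U]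
    (a : F → U → ℝ) (r : U → ℝ) (c : F → ℝ) (y : U → Finset F → ℝ) : Prop :=
  (∀ j S, 0 ≤ y j S) ∧
    ∀ i : F, ∑ j : U, ∑ S ∈ Finset.univ.filter (fun S : Finset F => i ∉ S),
      resCon a r S i j * y j S ≤ c i

/-- Theorem 1: cost shares induced by a KC-dual feasible solution satisfy the
core property. -/
theorem kc_dual_cost_shares_core
    {F U : Type*} [Fintype F] [DecidableEq F] [Fintype U]
    (a : F → U → ℝ) (r : U → ℝ) (c : F → ℝ)
    (ha : ∀ i j, 0 ≤ a i j) (hc : ∀ i, 0 ≤ c i)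
    (y : U → Finset F → ℝ) (hy : KCDualFeasible a r c y)
    (ξ : U → ℝ) (hξ : ∀ j, ξ j = ∑ S : Finset F, resReq a r S j * y j S) :
    ∀ (J : Finset U) (X : Finset F),
      (∀ j ∈ J, r j ≤ ∑ i ∈ X, a i j) →
      ∑ j ∈ J, ξ j ≤ ∑ i ∈ X, c i := by
  obtain ⟨hy0, hyc⟩ := hy
  intro J X hJX
  have hR0 : ∀ S j, 0 ≤ resReq a r S j := fun S j => le_max_right _ _
  have hcon0 : ∀ S i j, 0 ≤ resCon a r S i j := by
    intro S i j
    unfold resCon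
    split
    · exact le_refl 0
    · exact le_min (ha i j) (hR0 S j)
  -- key pointwise inequality
  have key : ∀ j ∈ J, ∀ S : Finset F,
      resReq a r S j ≤ ∑ i ∈ X \ S, min (a i j) (resReq a r S j) := by
    intro j hj S
    by_cases h : ∃ i ∈ X \ S, resReq a r S j ≤ a i j
    · obtain ⟨i, hi, hai⟩ := h
      calc resReq a r S j = min (a i j) (resReq a r S j) := (min_eq_right hai).symm
        _ ≤ ∑ i ∈ X \ S, min (a i j) (resReq a r S j) :=
          Finset.single_le_sum (fun k _ => le_min (ha k j) (hR0 S j)) hi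
    · push_neg at h
      have heq : ∀ i ∈ X \ S, min (a i j) (resReq a r S j) = a i j := fun i hi =>
        min_eq_left (le_of_lt (h i hi))
      rw [Finset.sum_congr rfl heq]
      rcases le_or_gt (resReq a r S j) 0 with h0 | h0
      · exact h0.trans (Finset.sum_nonneg fun i _ => ha i j)
      · have hRe : resReq a r S j = r j - ∑ i ∈ S, a i j := by
          unfold resReq at h0 ⊢
          rcases max_cases (r j - ∑ i ∈ S, a i j) 0 with ⟨h1, _⟩ | ⟨h1, _⟩
          · exact h1
          · rw [h1] at h0; linarith
        have h1 : ∑ i ∈ X ∩ S, a i j ≤ ∑ i ∈ S, a i j :=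
          Finset.sum_le_sum_of_subset_of_nonneg Finset.inter_subset_right
            (fun i _ _ => ha i j)
        have h2 : ∑ i ∈ X ∩ S, a i j + ∑ i ∈ X \ S, a i j = ∑ i ∈ X, a i j :=
          Finset.sum_inter_add_sum_sdiff X S (fun i => a i j)
        have h3 := hJX j hj
        rw [hRe]
        linarith
  calc ∑ j ∈ J, ξ j = ∑ j ∈ J, ∑ S : Finset F, resReq a r S j * y j S := by
        exact Finset.sum_congr rfl fun j _ => hξ j
    _ ≤ ∑ j ∈ J, ∑ S : Finset F,
          (∑ i ∈ X \ S, min (a i j) (resReq a r S j)) * y j S := by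
        refine Finset.sum_le_sum fun j hj => Finset.sum_le_sum fun S _ => ?_
        exact mul_le_mul_of_nonneg_right (key j hj S) (hy0 j S)
    _ = ∑ j ∈ J, ∑ S : Finset F, ∑ i ∈ X, resCon a r S i j * y j S := by
        refine Finset.sum_congr rfl fun j _ => Finset.sum_congr rfl fun S _ => ?_
        rw [Finset.sum_mul]
        have h0 : ∀ i ∈ X, i ∉ X \ S → resCon a r S i j * y j S = 0 := by
          intro i hiX hi
          have hiS : i ∈ S := by
            by_contra hS
            exact hi (Finset.mem_sdiff.mpr ⟨hiX, hS⟩)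
          simp [resCon, hiS]
        rw [← Finset.sum_subset Finset.sdiff_subset h0]
        refine Finset.sum_congr rfl fun i hi => ?_
        have : i ∉ S := (Finset.mem_sdiff.mp hi).2
        simp [resCon, this]
    _ = ∑ i ∈ X, ∑ j ∈ J, ∑ S ∈ Finset.univ.filter (fun S : Finset F => i ∉ S),
          resCon a r S i j * y j S := by
        rw [show (∑ j ∈ J, ∑ S : Finset F, ∑ i ∈ X, resCon a r S i j * y j S)
              = ∑ j ∈ J, ∑ i ∈ X, ∑ S : Finset F, resCon a r S i j * y j S from
            Finset.sum_congr rfl fun j _ => Finset.sum_comm,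
          Finset.sum_comm]
        refine Finset.sum_congr rfl fun i _ => Finset.sum_congr rfl fun j _ => ?_
        refine (Finset.sum_subset (Finset.filter_subset _ _) ?_).symm
        intro S _ hS
        have hiS : i ∈ S := by
          by_contra h
          exact hS (Finset.mem_filter.mpr ⟨Finset.mem_univ S, h⟩)
        simp [resCon, hiS]
    _ ≤ ∑ i ∈ X, ∑ j : U, ∑ S ∈ Finset.univ.filter (fun S : Finset F => i ∉ S),
          resCon a r S i j * y j S := by
        refine Finset.sum_le_sum fun i _ => ?_
        refine Finset.sum_le_sum_of_subset_of_nonneg (Finset.subset_univ J) ?_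
        intro j _ _
        exact Finset.sum_nonneg fun S _ => mul_nonneg (hcon0 S i j) (hy0 j S)
    _ ≤ ∑ i ∈ X, c i := Finset.sum_le_sum fun i _ => hyc i
end

section
/- Let y be a KC-dual feasible solution with induced cost shares ξ_j = Σ_{S⊆F} r_j^S · y_j^S, let α ≥ 1, and let X* ⊆ F be feasible for the full user set U with Σ_{i∈X*} c_i ≤ α · Σ_{j∈U} Σ_{S⊆F} r_j^S y_j^S. Then the cost shares ξ satisfy the core property (for every J ⊆ U and every X ⊆ F feasible for J, Σ_{j∈J} ξ_j ≤ Σ_{i∈X} c_i) and recover at least a 1/α fraction of the cost: Σ_{j∈U} ξ_j ≥ (1/α) · Σ_{i∈X*} c_i. (Corollary to Theorem 1.) -/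
open Finset

lemma resCon_nonneg {F U : Type*} [DecidableEq F]
    (a : F → U → ℝ) (r : U → ℝ) (ha : ∀ i j, 0 ≤ a i j) (S : Finset F) (i : F) (j : U) :
    0 ≤ resCon a r S i j := by
  unfold resCon resReq
  split
  · exact le_refl 0
  · exact le_min (ha i j) (le_max_right _ _)

lemma key_cover {F U : Type*} [DecidableEq F]
    (a : F → U → ℝ) (r : U → ℝ) (ha : ∀ i j, 0 ≤ a i j)
    (S X : Finset F) (j : U) (hfeas : r j ≤ ∑ i ∈ X, a i j) :
    resReq a r S j ≤ ∑ i ∈ X, resCon a r S i j := by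
  set R := resReq a r S j with hR
  have hR0 : 0 ≤ R := le_max_right _ _
  rcases eq_or_lt_of_le hR0 with h0 | hpos
  · rw [← h0]; exact Finset.sum_nonneg fun i _ => resCon_nonneg a r ha S i j
  by_cases hex : ∃ i ∈ X, i ∉ S ∧ R ≤ a i j
  · obtain ⟨i, hiX, hiS, hle⟩ := hex
    calc R = resCon a r S i j := by simp [resCon, hiS, min_eq_right hle, hR]; exact hle
    _ ≤ ∑ i ∈ X, resCon a r S i j :=
      Finset.single_le_sum (fun k _ => resCon_nonneg a r ha S k j) hiX
  · push_neg at hex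
    have hRval : R = r j - ∑ i ∈ S, a i j := by
      rw [hR, resReq]
      rcases max_cases (r j - ∑ i ∈ S, a i j) 0 with ⟨h1, _⟩ | ⟨h1, _⟩
      · rw [h1]
      · exfalso
        rw [hR, resReq, h1] at hpos
        exact lt_irrefl 0 hpos
    have hsubS : X.filter (fun i => i ∈ S) ⊆ S := by
      intro i hi; exact (Finset.mem_filter.mp hi).2
    have hsub : ∑ i ∈ X.filter (fun i => i ∈ S), a i j ≤ ∑ i ∈ S, a i j :=
      Finset.sum_le_sum_of_subset_of_nonneg hsubS (fun i _ _ => ha i j)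
    have hsplit : ∑ i ∈ X.filter (fun i => i ∈ S), a i j
        + ∑ i ∈ X.filter (fun i => ¬ i ∈ S), a i j = ∑ i ∈ X, a i j :=
      Finset.sum_filter_add_sum_filter_not X _ _
    have h1 : R ≤ ∑ i ∈ X.filter (fun i => ¬ i ∈ S), a i j := by
      rw [hRval]
      linarith
    refine h1.trans ?_
    have heq : ∑ i ∈ X.filter (fun i => ¬ i ∈ S), a i j
        ≤ ∑ i ∈ X.filter (fun i => ¬ i ∈ S), resCon a r S i j := by
      apply Finset.sum_le_sum
      intro i hi
      obtain ⟨hiX, hiS⟩ := Finset.mem_filter.mp hi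
      rw [resCon, if_neg hiS]
      exact le_min le_rfl (le_of_lt (hex i hiX hiS))
    refine heq.trans ?_
    refine Finset.sum_le_sum_of_subset_of_nonneg (Finset.filter_subset _ _) ?_
    intro i _ _
    exact resCon_nonneg a r ha S i j

/-- Corollary to Theorem 1: an α-approximate (relative to the KC-LP dual) integer
solution yields cost shares satisfying the core property that recover
at least a 1/α fraction of the cost. -/
theorem kc_dual_cost_shares_recovery
    {F U : Type*} [Fintype F] [DecidableEq F] [Fintype U]
    (a : F → U → ℝ) (r : U → ℝ) (c : F → ℝ)
    (ha : ∀ i j, 0 ≤ a i j) (hc : ∀ i, 0 ≤ c i)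
    (y : U → Finset F → ℝ) (hy : KCDualFeasible a r c y)
    (ξ : U → ℝ) (hξ : ∀ j, ξ j = ∑ S : Finset F, resReq a r S j * y j S)
    (α : ℝ) (hα : 1 ≤ α)
    (Xstar : Finset F) (hfeas : ∀ j : U, r j ≤ ∑ i ∈ Xstar, a i j)
    (happrox : ∑ i ∈ Xstar, c i ≤
      α * ∑ j : U, ∑ S : Finset F, resReq a r S j * y j S) :
    (∀ (J : Finset U) (X : Finset F),
      (∀ j ∈ J, r j ≤ ∑ i ∈ X, a i j) →
      ∑ j ∈ J, ξ j ≤ ∑ i ∈ X, c i) ∧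
    (1 / α) * ∑ i ∈ Xstar, c i ≤ ∑ j : U, ξ j := by
  obtain ⟨hy0, hyfeas⟩ := hy
  constructor
  · intro J X hXfeas
    have step1 : ∑ j ∈ J, ξ j ≤
        ∑ j ∈ J, ∑ S : Finset F, ∑ i ∈ X, resCon a r S i j * y j S := by
      apply Finset.sum_le_sum
      intro j hj
      rw [hξ j]
      apply Finset.sum_le_sum
      intro S _
      rw [← Finset.sum_mul]
      exact mul_le_mul_of_nonneg_right
        (key_cover a r ha S X j (hXfeas j hj)) (hy0 j S)
    have step2 : ∑ j ∈ J, ∑ S : Finset F, ∑ i ∈ X, resCon a r S i j * y j S ≤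
        ∑ j : U, ∑ S : Finset F, ∑ i ∈ X, resCon a r S i j * y j S := by
      apply Finset.sum_le_sum_of_subset_of_nonneg (Finset.subset_univ J)
      intro j _ _
      apply Finset.sum_nonneg; intro S _
      apply Finset.sum_nonneg; intro i _
      exact mul_nonneg (resCon_nonneg a r ha S i j) (hy0 j S)
    have step3 : ∑ j : U, ∑ S : Finset F, ∑ i ∈ X, resCon a r S i j * y j S
        = ∑ i ∈ X, ∑ j : U, ∑ S : Finset F, resCon a r S i j * y j S := by
      calc ∑ j : U, ∑ S : Finset F, ∑ i ∈ X, resCon a r S i j * y j S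
          = ∑ j : U, ∑ i ∈ X, ∑ S : Finset F, resCon a r S i j * y j S :=
            Finset.sum_congr rfl fun j _ => Finset.sum_comm
        _ = ∑ i ∈ X, ∑ j : U, ∑ S : Finset F, resCon a r S i j * y j S :=
            Finset.sum_comm
    have step4 : ∀ i : F, ∑ j : U, ∑ S : Finset F, resCon a r S i j * y j S
        = ∑ j : U, ∑ S ∈ Finset.univ.filter (fun S : Finset F => i ∉ S),
            resCon a r S i j * y j S := by
      intro i
      congr 1
      ext j
      symm
      apply Finset.sum_subset (Finset.filter_subset _ _)
      intro S _ hS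
      simp only [Finset.mem_filter, Finset.mem_univ, true_and, not_not] at hS
      rw [resCon, if_pos hS, zero_mul]
    calc ∑ j ∈ J, ξ j ≤ ∑ j : U, ∑ S : Finset F, ∑ i ∈ X, resCon a r S i j * y j S :=
          step1.trans step2
      _ = ∑ i ∈ X, ∑ j : U, ∑ S : Finset F, resCon a r S i j * y j S := step3
      _ ≤ ∑ i ∈ X, c i := by
          apply Finset.sum_le_sum
          intro i _
          rw [step4 i]
          exact hyfeas i
  · have hαpos : 0 < α := lt_of_lt_of_le one_pos hα
    have hsum : ∑ j : U, ξ j = ∑ j : U, ∑ S : Finset F, resReq a r S j * y j S := by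
      apply Finset.sum_congr rfl
      intro j _
      exact hξ j
    rw [hsum, div_mul_eq_mul_div, div_le_iff₀ hαpos, one_mul]
    linarith [happrox]
end

section
/- Key inequality behind the Carnes–Shmoys min-cost knapsack analysis: fix a single user j with requirement r_j and contributions a_{ij} ≥ 0. Let X ⊆ F and ℓ ∈ X be such that X \ {ℓ} is infeasible for j, i.e., Σ_{i∈X\{ℓ}} a_{ij} < r_j. Then for every S ⊆ X \ {ℓ}, the residual contributions of X satisfy Σ_{i∈X\S} a_{ij}^S ≤ 2 · r_j^S. -/
open Finset

/-- Single-user residual requirement. -/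
noncomputable def resReq1 {F : Type*} [DecidableEq F]
    (a : F → ℝ) (R : ℝ) (S : Finset F) : ℝ :=
  max (R - ∑ i ∈ S, a i) 0

/-- Single-user residual contribution. -/
noncomputable def resCon1 {F : Type*} [DecidableEq F]
    (a : F → ℝ) (R : ℝ) (S : Finset F) (i : F) : ℝ :=
  if i ∈ S then 0 else min (a i) (resReq1 a R S)

/-- Key inequality behind the Carnes–Shmoys min-cost knapsack analysis: if
removing some `ℓ ∈ X` makes `X` infeasible for the single user, then for every
`S ⊆ X \ {ℓ}` the residual contribution of `X` is at most twice the residual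
requirement. -/
theorem carnes_shmoys_key_inequality
    {F : Type*} [Fintype F] [DecidableEq F]
    (a : F → ℝ) (r : ℝ) (ha : ∀ i, 0 ≤ a i)
    (X : Finset F) (ℓ : F) (hℓ : ℓ ∈ X)
    (hinfeas : ∑ i ∈ X \ {ℓ}, a i < r) :
    ∀ S ⊆ X \ {ℓ}, ∑ i ∈ X \ S, resCon1 a r S i ≤ 2 * resReq1 a r S := by
  intro S hS
  have hℓS : ℓ ∉ S := fun h => (Finset.mem_sdiff.mp (hS h)).2 (mem_singleton_self ℓ)
  have hsumS : ∑ i ∈ S, a i ≤ ∑ i ∈ X \ {ℓ}, a i :=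
    Finset.sum_le_sum_of_subset_of_nonneg hS (fun i _ _ => ha i)
  have hρpos : 0 < r - ∑ i ∈ S, a i := by linarith
  have hρ : resReq1 a r S = r - ∑ i ∈ S, a i := by
    simp [resReq1, le_of_lt hρpos]
  set ρ := r - ∑ i ∈ S, a i with hρdef
  have hℓmem : ℓ ∈ X \ S := Finset.mem_sdiff.mpr ⟨hℓ, hℓS⟩
  have hsplit : X \ S = insert ℓ ((X \ {ℓ}) \ S) := by
    ext i
    simp only [Finset.mem_insert, Finset.mem_sdiff, Finset.mem_singleton]
    constructor
    · rintro ⟨hiX, hiS⟩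
      by_cases h : i = ℓ
      · exact Or.inl h
      · exact Or.inr ⟨⟨hiX, h⟩, hiS⟩
    · rintro (rfl | ⟨⟨hiX, _⟩, hiS⟩)
      · exact ⟨hℓ, hℓS⟩
      · exact ⟨hiX, hiS⟩
  have hℓnot : ℓ ∉ (X \ {ℓ}) \ S := by simp
  rw [hsplit, Finset.sum_insert hℓnot]
  have hterm : ∀ i ∈ (X \ {ℓ}) \ S, resCon1 a r S i ≤ a i := by
    intro i hi
    have hiS : i ∉ S := (Finset.mem_sdiff.mp hi).2
    simp [resCon1, hiS, min_le_left]
  have h1 : ∑ i ∈ (X \ {ℓ}) \ S, resCon1 a r S i ≤ ∑ i ∈ (X \ {ℓ}) \ S, a i :=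
    Finset.sum_le_sum hterm
  have h2 : ∑ i ∈ (X \ {ℓ}) \ S, a i = ∑ i ∈ X \ {ℓ}, a i - ∑ i ∈ S, a i := by
    rw [Finset.sum_sdiff_eq_sub hS]
  have hℓterm : resCon1 a r S ℓ ≤ ρ := by
    simp [resCon1, hℓS, hρ]
  rw [hρ]
  have : ∑ i ∈ (X \ {ℓ}) \ S, a i ≤ ρ := by rw [h2]; linarith
  linarith
end

section
/- 2-approximation guarantee of the primal-dual min-cost knapsack scheme, stated via its invariants (Theorem 3, Carnes–Shmoys): fix a single user j. Let X ⊆ F and let y = (y^S)_{S⊆F} with y^S ≥ 0 be individually dual feasible for j, and suppose (i) every facility i ∈ X is tight: Σ_{S⊆F, i∉S} a_{ij}^S · y^S = c_i, and (ii) for every S ⊆ F with y^S > 0, Σ_{i∈X\S} a_{ij}^S ≤ 2 · r_j^S. Then Σ_{i∈X} c_i ≤ 2 · Σ_{S⊆F} r_j^S · y^S. -/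
open Finset

/-- 2-approximation guarantee of the primal-dual min-cost knapsack scheme,
stated via its invariants (Carnes–Shmoys): if every selected facility is
tight and every subset `S` with positive dual has residual contribution
at most `2 r^S`, then the cost of the selection is at most twice the dual
objective. -/
theorem carnes_shmoys_two_approx
    {F : Type*} [Fintype F] [DecidableEq F]
    (a : F → ℝ) (r : ℝ) (c : F → ℝ)
    (ha : ∀ i, 0 ≤ a i) (hc : ∀ i, 0 ≤ c i)
    (X : Finset F) (y : Finset F → ℝ) (hy : ∀ S, 0 ≤ y S)
    (hfeas : ∀ i : F,
      ∑ S ∈ Finset.univ.filter (fun S : Finset F => i ∉ S), resCon1 a r S i * y S ≤ c i)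
    (htight : ∀ i ∈ X,
      ∑ S ∈ Finset.univ.filter (fun S : Finset F => i ∉ S), resCon1 a r S i * y S = c i)
    (hhalf : ∀ S : Finset F, 0 < y S → ∑ i ∈ X \ S, resCon1 a r S i ≤ 2 * resReq1 a r S) :
    ∑ i ∈ X, c i ≤ 2 * ∑ S : Finset F, resReq1 a r S * y S := by
  have key : ∑ i ∈ X, c i
      = ∑ S : Finset F, (∑ i ∈ X \ S, resCon1 a r S i) * y S := by
    calc ∑ i ∈ X, c i
        = ∑ i ∈ X, ∑ S : Finset F, resCon1 a r S i * y S := by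
          refine Finset.sum_congr rfl fun i hi => ?_
          rw [← htight i hi]
          refine Finset.sum_subset (Finset.filter_subset _ _) fun S _ hS => ?_
          have : i ∈ S := by simpa using hS
          simp [resCon1, this]
      _ = ∑ S : Finset F, ∑ i ∈ X, resCon1 a r S i * y S := Finset.sum_comm
      _ = ∑ S : Finset F, (∑ i ∈ X \ S, resCon1 a r S i) * y S := by
          refine Finset.sum_congr rfl fun S _ => ?_
          rw [← Finset.sum_mul]
          congr 1
          symm
          refine Finset.sum_subset Finset.sdiff_subset fun i hi hni => ?_
          have : i ∈ S := by
            by_contra h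
            exact hni (Finset.mem_sdiff.mpr ⟨hi, h⟩)
          simp [resCon1, this]
  rw [key, Finset.mul_sum]
  refine Finset.sum_le_sum fun S _ => ?_
  rcases lt_or_eq_of_le (hy S) with hpos | hzero
  · have := hhalf S hpos
    calc (∑ i ∈ X \ S, resCon1 a r S i) * y S ≤ (2 * resReq1 a r S) * y S :=
          mul_le_mul_of_nonneg_right this (hy S)
      _ = 2 * (resReq1 a r S * y S) := by ring
  · simp [← hzero]
end

section
/- Theorem 2 (core property and 2Δ price-of-fair-sharing of the cross-monotone mechanism, stated via its certificates): suppose c_i ≥ 0 for all i ∈ F and for each user j ∈ U there are a set X_j ⊆ F feasible for {j} and nonnegative reals (y'^S_j)_{S⊆F} such that (i) y'_j is individually dual feasible for j (Σ_{S⊆F, i∉S} a_{ij}^S y'^S_j ≤ c_i for all i ∈ F) and (ii) Σ_{i∈X_j} c_i ≤ 2 Σ_{S⊆F} r_j^S y'^S_j. Let Δ = max_{i∈F} |{j ∈ U : a_{ij} > 0}| with Δ ≥ 1, let X = ∪_{j∈U} X_j, and define cost shares ξ_j = (1/Δ) Σ_{S⊆F} r_j^S y'^S_j. Then X is feasible for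 U, the cost shares satisfy the core property (for every J ⊆ U and every X' ⊆ F feasible for J, Σ_{j∈J} ξ_j ≤ Σ_{i∈X'} c_i), and Σ_{j∈U} ξ_j ≥ (1/(2Δ)) · Σ_{i∈X} c_i. -/
open Finset

lemma sum_min_ge {F : Type*} (T : Finset F) (f : F → ℝ) (t : ℝ)
    (hf : ∀ i ∈ T, 0 ≤ f i) (ht : 0 ≤ t) (h : t ≤ ∑ i ∈ T, f i) :
    t ≤ ∑ i ∈ T, min (f i) t := by
  by_cases hall : ∀ i ∈ T, f i < t
  · calc t ≤ ∑ i ∈ T, f i := h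
      _ = ∑ i ∈ T, min (f i) t := by
        apply Finset.sum_congr rfl
        intro i hi; exact (min_eq_left (hall i hi).le).symm
  · push_neg at hall
    obtain ⟨i, hi, hit⟩ := hall
    calc t = min (f i) t := (min_eq_right hit).symm
      _ ≤ ∑ i ∈ T, min (f i) t :=
        Finset.single_le_sum (fun k hk => le_min (hf k hk) ht) hi

lemma sum_biUnion_le_nonneg {F U : Type*} [DecidableEq F] (c : F → ℝ) (hc : ∀ i, 0 ≤ c i)
    (s : Finset U) (Xj : U → Finset F) :
    ∑ i ∈ s.biUnion Xj, c i ≤ ∑ j ∈ s, ∑ i ∈ Xj j, c i := by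
  classical
  induction s using Finset.induction_on with
  | empty => simp
  | @insert u s hu ih =>
    rw [Finset.biUnion_insert, Finset.sum_insert hu]
    calc ∑ i ∈ Xj u ∪ s.biUnion Xj, c i
        ≤ ∑ i ∈ Xj u, c i + ∑ i ∈ s.biUnion Xj, c i := by
          have h := Finset.sum_union_inter (s₁ := Xj u) (s₂ := s.biUnion Xj) (f := c)
          have h2 : 0 ≤ ∑ i ∈ Xj u ∩ s.biUnion Xj, c i :=
            Finset.sum_nonneg fun i _ => hc i
          linarith
      _ ≤ _ := by linarith

lemma resReq_nonneg {F U : Type*} [DecidableEq F]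
    (a : F → U → ℝ) (r : U → ℝ) (S : Finset F) (j : U) : 0 ≤ resReq a r S j :=
  le_max_right _ _

/-- Key core lemma: if `X'` is feasible for `j`, the residual requirement is covered
by the residual contributions of `X'`. -/
lemma resReq_le_sum_resCon {F U : Type*} [DecidableEq F]
    (a : F → U → ℝ) (r : U → ℝ) (ha : ∀ i j, 0 ≤ a i j)
    (X' : Finset F) (j : U) (hfeas : r j ≤ ∑ i ∈ X', a i j) (S : Finset F) :
    resReq a r S j ≤ ∑ i ∈ X', resCon a r S i j := by
  classical
  have hsplit : ∑ i ∈ X', resCon a r S i j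
      = ∑ i ∈ X'.filter (fun i => i ∉ S), min (a i j) (resReq a r S j) := by
    rw [← Finset.sum_filter_add_sum_filter_not X' (fun i => i ∈ S)]
    have h1 : ∑ i ∈ X'.filter (fun i => i ∈ S), resCon a r S i j = 0 := by
      apply Finset.sum_eq_zero; intro i hi
      simp only [Finset.mem_filter] at hi
      simp [resCon, hi.2]
    have h2 : ∑ i ∈ X'.filter (fun i => i ∉ S), resCon a r S i j
        = ∑ i ∈ X'.filter (fun i => i ∉ S), min (a i j) (resReq a r S j) := by
      apply Finset.sum_congr rfl; intro i hi
      simp only [Finset.mem_filter] at hi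
      simp [resCon, hi.2]
    rw [h1, h2, zero_add]
  rw [hsplit]
  apply sum_min_ge _ _ _ (fun i _ => ha i j) (resReq_nonneg a r S j)
  -- resReq ≤ ∑ over X' \ S of a
  have hXsplit : ∑ i ∈ X'.filter (fun i => i ∈ S), a i j
      + ∑ i ∈ X'.filter (fun i => i ∉ S), a i j = ∑ i ∈ X', a i j :=
    Finset.sum_filter_add_sum_filter_not X' (fun i => i ∈ S) _
  have hsub : ∑ i ∈ X'.filter (fun i => i ∈ S), a i j ≤ ∑ i ∈ S, a i j := by
    apply Finset.sum_le_sum_of_subset_of_nonneg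
    · intro i hi; exact (Finset.mem_filter.1 hi).2
    · intro i _ _; exact ha i j
  have hnn : 0 ≤ ∑ i ∈ X'.filter (fun i => i ∉ S), a i j :=
    Finset.sum_nonneg fun i _ => ha i j
  have : r j - ∑ i ∈ S, a i j ≤ ∑ i ∈ X'.filter (fun i => i ∉ S), a i j := by linarith
  exact max_le this hnn

/-- Theorem 2: the cross-monotone mechanism, stated via its certificates,
produces a feasible solution for the full user set, cost shares satisfying the
core property, and a cost-recovery ratio of `1/(2Δ)`. -/
theorem cross_monotone_mechanism
    {F U : Type*} [Fintype F] [DecidableEq F] [Fintype U]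
    (a : F → U → ℝ) (r : U → ℝ) (c : F → ℝ)
    (ha : ∀ i j, 0 ≤ a i j) (hc : ∀ i, 0 ≤ c i)
    (Xj : U → Finset F) (hXj : ∀ j : U, r j ≤ ∑ i ∈ Xj j, a i j)
    (y' : U → Finset F → ℝ) (hy' : ∀ j S, 0 ≤ y' j S)
    (hindiv : ∀ (j : U) (i : F),
      ∑ S ∈ Finset.univ.filter (fun S : Finset F => i ∉ S),
        resCon a r S i j * y' j S ≤ c i)
    (happrox : ∀ j : U, ∑ i ∈ Xj j, c i ≤ 2 * ∑ S : Finset F, resReq a r S j * y' j S)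
    (Δ : ℕ)
    (hΔ : Δ = Finset.univ.sup
      (fun i : F => (Finset.univ.filter (fun j : U => 0 < a i j)).card))
    (hΔpos : 1 ≤ Δ)
    (X : Finset F) (hX : X = Finset.univ.biUnion Xj)
    (ξ : U → ℝ)
    (hξ : ∀ j, ξ j = (1 / (Δ : ℝ)) * ∑ S : Finset F, resReq a r S j * y' j S) :
    -- X is feasible for the full user set U
    (∀ j : U, r j ≤ ∑ i ∈ X, a i j) ∧
    -- the cost shares satisfy the core property
    (∀ (J : Finset U) (X' : Finset F),
      (∀ j ∈ J, r j ≤ ∑ i ∈ X', a i j) →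
      ∑ j ∈ J, ξ j ≤ ∑ i ∈ X', c i) ∧
    -- the cost shares recover at least a 1/(2Δ) fraction of the cost
    (1 / (2 * (Δ : ℝ))) * ∑ i ∈ X, c i ≤ ∑ j : U, ξ j := by
  classical
  have hΔR : (0 : ℝ) < (Δ : ℝ) := by exact_mod_cast hΔpos
  set D : U → ℝ := fun j => ∑ S : Finset F, resReq a r S j * y' j S with hD
  have hDnn : ∀ j, 0 ≤ D j := fun j =>
    Finset.sum_nonneg fun S _ =>
      mul_nonneg (resReq_nonneg a r S j) (hy' j S)
  refine ⟨?_, ?_, ?_⟩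
  · -- feasibility
    intro j
    have hsub : Xj j ⊆ X := by
      rw [hX]; intro i hi
      exact Finset.mem_biUnion.2 ⟨j, Finset.mem_univ j, hi⟩
    exact le_trans (hXj j)
      (Finset.sum_le_sum_of_subset_of_nonneg hsub fun i _ _ => ha i j)
  · -- core property
    intro J X' hfeas
    -- per-facility partial dual value
    set g : F → U → ℝ := fun i j =>
      ∑ S ∈ Finset.univ.filter (fun S : Finset F => i ∉ S),
        resCon a r S i j * y' j S with hg
    have hgnn : ∀ i j, 0 ≤ g i j := fun i j =>
      Finset.sum_nonneg fun S hS => by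
        apply mul_nonneg _ (hy' j S)
        simp only [resCon]
        split
        · exact le_rfl
        · exact le_min (ha i j) (resReq_nonneg a r S j)
    have key : ∀ j ∈ J, D j ≤ ∑ i ∈ X', g i j := by
      intro j hj
      have step1 : D j ≤ ∑ S : Finset F, (∑ i ∈ X', resCon a r S i j) * y' j S := by
        apply Finset.sum_le_sum; intro S _
        exact mul_le_mul_of_nonneg_right
          (resReq_le_sum_resCon a r ha X' j (hfeas j hj) S) (hy' j S)
      have step2 : ∑ S : Finset F, (∑ i ∈ X', resCon a r S i j) * y' j S
          = ∑ i ∈ X', ∑ S : Finset F, resCon a r S i j * y' j S := by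
        rw [Finset.sum_comm]
        apply Finset.sum_congr rfl; intro S _
        rw [Finset.sum_mul]
      have step3 : ∀ i, ∑ S : Finset F, resCon a r S i j * y' j S = g i j := by
        intro i
        rw [hg]
        symm
        apply Finset.sum_filter_of_ne
        intro S _ hne
        intro hiS
        apply hne
        simp [resCon, hiS]
      calc D j ≤ _ := step1
        _ = ∑ i ∈ X', ∑ S : Finset F, resCon a r S i j * y' j S := step2
        _ = ∑ i ∈ X', g i j := by
            exact Finset.sum_congr rfl fun i _ => step3 i
    -- counting: for each i, at most Δ users have a i j > 0
    have hcount : ∀ i, ∑ j ∈ J, g i j ≤ (Δ : ℝ) * c i := by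
      intro i
      have hzero : ∀ j ∈ J, g i j ≠ 0 → 0 < a i j := by
        intro j _ hne
        rcases lt_or_eq_of_le (ha i j) with h | h
        · exact h
        · exfalso; apply hne
          apply Finset.sum_eq_zero; intro S _
          have : resCon a r S i j = 0 := by
            simp only [resCon]
            split
            · rfl
            · rw [← h, min_eq_left (resReq_nonneg a r S j)]
          rw [this, zero_mul]
      have hfilter : ∑ j ∈ J, g i j = ∑ j ∈ J.filter (fun j => 0 < a i j), g i j :=
        (Finset.sum_filter_of_ne hzero).symm
      have hcard : (J.filter (fun j => 0 < a i j)).card ≤ Δ := by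
        rw [hΔ]
        calc (J.filter (fun j => 0 < a i j)).card
            ≤ (Finset.univ.filter (fun j : U => 0 < a i j)).card :=
              Finset.card_le_card (Finset.filter_subset_filter _ (Finset.subset_univ J))
          _ ≤ _ := Finset.le_sup
              (f := fun i : F => (Finset.univ.filter (fun j : U => 0 < a i j)).card)
              (Finset.mem_univ i)
      calc ∑ j ∈ J, g i j
          = ∑ j ∈ J.filter (fun j => 0 < a i j), g i j := hfilter
        _ ≤ (J.filter (fun j => 0 < a i j)).card • c i :=
            Finset.sum_le_card_nsmul _ _ _ fun j _ => hindiv j i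
        _ = ((J.filter (fun j => 0 < a i j)).card : ℝ) * c i := by
            rw [nsmul_eq_mul]
        _ ≤ (Δ : ℝ) * c i := by
            apply mul_le_mul_of_nonneg_right _ (hc i)
            exact_mod_cast hcard
    have main : ∑ j ∈ J, D j ≤ (Δ : ℝ) * ∑ i ∈ X', c i := by
      calc ∑ j ∈ J, D j ≤ ∑ j ∈ J, ∑ i ∈ X', g i j := Finset.sum_le_sum key
        _ = ∑ i ∈ X', ∑ j ∈ J, g i j := Finset.sum_comm
        _ ≤ ∑ i ∈ X', (Δ : ℝ) * c i := Finset.sum_le_sum fun i _ => hcount i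
        _ = (Δ : ℝ) * ∑ i ∈ X', c i := by rw [Finset.mul_sum]
    have hξD : ∑ j ∈ J, ξ j = (1 / (Δ : ℝ)) * ∑ j ∈ J, D j := by
      rw [Finset.mul_sum]
      exact Finset.sum_congr rfl fun j _ => hξ j
    rw [hξD]
    rw [div_mul_eq_mul_div, one_mul, div_le_iff₀ hΔR]
    linarith [main]
  · -- cost recovery
    have h1 : ∑ i ∈ X, c i ≤ ∑ j : U, ∑ i ∈ Xj j, c i := by
      rw [hX]; exact sum_biUnion_le_nonneg c hc _ _
    have h2 : ∑ j : U, ∑ i ∈ Xj j, c i ≤ 2 * ∑ j : U, D j := by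
      rw [Finset.mul_sum]
      exact Finset.sum_le_sum fun j _ => happrox j
    have h3 : ∑ j : U, ξ j = (1 / (Δ : ℝ)) * ∑ j : U, D j := by
      rw [Finset.mul_sum]
      exact Finset.sum_congr rfl fun j _ => hξ j
    rw [h3]
    calc (1 / (2 * (Δ : ℝ))) * ∑ i ∈ X, c i
        ≤ (1 / (2 * (Δ : ℝ))) * (2 * ∑ j : U, D j) := by
          apply mul_le_mul_of_nonneg_left (le_trans h1 h2)
          positivity
      _ = (1 / (Δ : ℝ)) * ∑ j : U, D j := by
          field_simp
end

section
/- Cross-monotonicity of the mechanism's cost shares: for a subset W ⊆ U of users, let Δ(W) = max_{i∈F} |{j ∈ W : a_{ij} > 0}|, and for each user j fix nonnegative reals (y'^S_j)_{S⊆F}; define ξ_j(W) = (1/Δ(W)) · Σ_{S⊆F} r_j^S y'^S_j. Then for every J ⊆ W ⊆ U and every j ∈ J with Δ(J) ≥ 1, one has Δ(J) ≤ Δ(W) and consequently ξ_j(W) ≤ ξ_j(J): no user's cost share increases when the served set grows. -/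
open Finset

/-- Column sparsity of the instance restricted to the user set `W`. -/
noncomputable def colSparsity {F U : Type*} [Fintype F] [DecidableEq U]
    (a : F → U → ℝ) (W : Finset U) : ℕ :=
  Finset.univ.sup (fun i : F => (W.filter (fun j : U => 0 < a i j)).card)

/-- Cross-monotonicity of the mechanism's cost shares: enlarging the served
set does not decrease the column sparsity, hence no user's cost share
increases. -/
theorem cost_shares_cross_monotone
    {F U : Type*} [Fintype F] [DecidableEq F] [Fintype U] [DecidableEq U]
    (a : F → U → ℝ) (r : U → ℝ)
    (y' : U → Finset F → ℝ) (hy' : ∀ j S, 0 ≤ y' j S)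
    (ξ : U → Finset U → ℝ)
    (hξ : ∀ (j : U) (W : Finset U),
      ξ j W = (1 / (colSparsity a W : ℝ)) * ∑ S : Finset F, resReq a r S j * y' j S) :
    ∀ (J W : Finset U), J ⊆ W → ∀ j ∈ J, 1 ≤ colSparsity a J →
      colSparsity a J ≤ colSparsity a W ∧ ξ j W ≤ ξ j J := by
  intro J W hJW j hj hΔ
  have hmono : colSparsity a J ≤ colSparsity a W := by
    apply Finset.sup_mono_fun
    intro i _
    exact Finset.card_le_card (Finset.filter_subset_filter _ hJW)
  refine ⟨hmono, ?_⟩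
  rw [hξ, hξ]
  have hsum : 0 ≤ ∑ S : Finset F, resReq a r S j * y' j S :=
    Finset.sum_nonneg fun S _ => mul_nonneg (le_max_right _ _) (hy' j S)
  have h1 : (0:ℝ) < (colSparsity a J : ℝ) := by exact_mod_cast hΔ
  have h2 : (colSparsity a J : ℝ) ≤ (colSparsity a W : ℝ) := by exact_mod_cast hmono
  gcongr
end
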